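/- Consider the alternating projection iteration in ℝ²: with A = (2, 0), L_{k+1} = P_B((L_k − S_k + A)/2) and S_{k+1} = P_B((S_k − L_k + A)/2), starting from L_0 = (√2, √2) and S_0 = (√2, −√2). Then the iterates do not converge linearly (geometrically) to the solution: for every c ∈ (0, 1) and every C > 0 there exists k ≥ 1 such that ‖L_k − (1, 0)‖ > C·c^k. -/

import Mathlib

/-- The point `(a, b)` of `ℝ²` (with the Euclidean norm). -/
noncomputable def vec2 (a b : ℝ) : EuclideanSpace ℝ (Fin 2) := WithLp.toLp 2 ![a, b]

/-- Metric projection onto the closed unit ball of `ℝ²`: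
`P_B(x) = x` if `‖x‖ ≤ 1` and `P_B(x) = x/‖x‖` otherwise. -/
noncomputable def ballProj (x : EuclideanSpace ℝ (Fin 2)) : EuclideanSpace ℝ (Fin 2) :=
  if ‖x‖ ≤ 1 then x else ‖x‖⁻¹ • x

lemma vec2_sub_add (a b c d e f : ℝ) :
    vec2 a b - vec2 c d + vec2 e f = vec2 (a - c + e) (b - d + f) := by
  ext i; fin_cases i <;> simp [vec2]

lemma vec2_smul (r a b : ℝ) : r • vec2 a b = vec2 (r*a) (r*b) := by
  ext i; fin_cases i <;> simp [vec2]

lemma norm_vec2 (a b : ℝ) : ‖vec2 a b‖ = Real.sqrt (a^2 + b^2) := by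
  rw [EuclideanSpace.norm_eq]
  simp [vec2, Fin.sum_univ_two, sq_abs]

lemma abs_le_norm_vec2 (a b : ℝ) : |b| ≤ ‖vec2 a b‖ := by
  rw [norm_vec2, ← Real.sqrt_sq_eq_abs]
  exact Real.sqrt_le_sqrt (by nlinarith [sq_nonneg a])

lemma ballProj_step (y : ℝ) (hy : y ≠ 0) :
    ballProj (vec2 1 y) =
      vec2 ((Real.sqrt (1+y^2))⁻¹) ((Real.sqrt (1+y^2))⁻¹ * y) := by
  have hy2 : 0 < y^2 := by positivity
  have hn : ‖vec2 1 y‖ = Real.sqrt (1 + y^2) := by rw [norm_vec2]; norm_num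
  have h1 : ¬ ‖vec2 1 y‖ ≤ 1 := by
    rw [hn]; push_neg
    exact (Real.lt_sqrt (by norm_num)).2 (by nlinarith)
  rw [ballProj, if_neg h1, hn, vec2_smul, mul_one]

lemma y_step (s : ℝ) (hs : 0 < s) :
    (Real.sqrt (1 + ((Real.sqrt s)⁻¹)^2))⁻¹ * (Real.sqrt s)⁻¹ = (Real.sqrt (s+1))⁻¹ := by
  have h1 : (0:ℝ) < Real.sqrt s := Real.sqrt_pos.2 hs
  have h2 : (0:ℝ) < Real.sqrt (s+1) := Real.sqrt_pos.2 (by linarith)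
  rw [inv_pow, Real.sq_sqrt hs.le]
  have h3 : (1 + s⁻¹) = (s+1)/s := by field_simp
  rw [h3, Real.sqrt_div (by linarith : (0:ℝ) ≤ s+1)]
  field_simp

/-- The alternating projection iterates for the feasibility problem `‖L‖ ≤ 1`, `‖S‖ ≤ 1`,
`L + S = (2,0)` started from `L₀ = (√2, √2)`, `S₀ = (√2, −√2)` do not converge linearly to
the solution `(1,0)`: for every `c ∈ (0,1)` and `C > 0` there is `k ≥ 1` with
`‖L_k − (1,0)‖ > C·cᵏ`. -/
theorem stmt_7 (L S : ℕ → EuclideanSpace ℝ (Fin 2))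
    (hL0 : L 0 = vec2 (Real.sqrt 2) (Real.sqrt 2))
    (hS0 : S 0 = vec2 (Real.sqrt 2) (-Real.sqrt 2))
    (hLrec : ∀ k : ℕ, L (k + 1) = ballProj ((1 / 2 : ℝ) • (L k - S k + vec2 2 0)))
    (hSrec : ∀ k : ℕ, S (k + 1) = ballProj ((1 / 2 : ℝ) • (S k - L k + vec2 2 0))) :
    ∀ c : ℝ, c ∈ Set.Ioo (0 : ℝ) 1 → ∀ C : ℝ, 0 < C →
      ∃ k : ℕ, 1 ≤ k ∧ C * c ^ k < ‖L k - vec2 1 0‖ := by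
  set y : ℕ → ℝ := fun k => (Real.sqrt (k + 1/2))⁻¹ with hy
  have hs : ∀ k : ℕ, (0:ℝ) < (k:ℝ) + 1/2 := by intro k; positivity
  have hypos : ∀ k, 0 < y k := fun k => inv_pos.2 (Real.sqrt_pos.2 (hs k))
  -- invariant
  have inv : ∀ k : ℕ, ∃ x : ℝ, L k = vec2 x (y k) ∧ S k = vec2 x (-(y k)) := by
    intro k
    induction k with
    | zero =>
      refine ⟨Real.sqrt 2, ?_, ?_⟩
      · rw [hL0]; congr 1
        simp only [hy]
        rw [show ((0:ℕ):ℝ) + 1/2 = (2:ℝ)⁻¹ by norm_num, Real.sqrt_inv, inv_inv]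
      · rw [hS0]; congr 2
        simp only [hy]
        rw [show ((0:ℕ):ℝ) + 1/2 = (2:ℝ)⁻¹ by norm_num, Real.sqrt_inv, inv_inv]
    | succ k ih =>
      obtain ⟨x, hLk, hSk⟩ := ih
      have hyk := hypos k
      have key : (1/2 : ℝ) • (L k - S k + vec2 2 0) = vec2 1 (y k) := by
        rw [hLk, hSk, vec2_sub_add, vec2_smul]
        congr 1 <;> ring
      have key' : (1/2 : ℝ) • (S k - L k + vec2 2 0) = vec2 1 (-(y k)) := by
        rw [hLk, hSk, vec2_sub_add, vec2_smul]
        congr 1 <;> ring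
      have h2 : (Real.sqrt (1 + (y k)^2))⁻¹ * y k = y (k+1) := by
        simp only [hy]
        rw [y_step _ (hs k)]
        congr 2
        push_cast; ring
      refine ⟨(Real.sqrt (1 + (y k)^2))⁻¹, ?_, ?_⟩
      · rw [hLrec k, key, ballProj_step _ hyk.ne', h2]
      · rw [hSrec k, key', ballProj_step _ (neg_ne_zero.2 hyk.ne'),
          show (-(y k))^2 = (y k)^2 from by ring,
          show (Real.sqrt (1 + (y k)^2))⁻¹ * -(y k)
              = -((Real.sqrt (1 + (y k)^2))⁻¹ * (y k)) from by ring, h2]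
  -- lower bound on the error
  have lower : ∀ k : ℕ, y k ≤ ‖L k - vec2 1 0‖ := by
    intro k
    obtain ⟨x, hLk, _⟩ := inv k
    have : L k - vec2 1 0 = vec2 (x - 1) (y k) := by
      rw [hLk]
      ext i; fin_cases i <;> simp [vec2]
    rw [this]
    calc y k = |y k| := (abs_of_pos (hypos k)).symm
    _ ≤ _ := abs_le_norm_vec2 _ _
  -- conclude
  rintro c ⟨hc0, hc1⟩ C hC
  have habs : |c| < 1 := by rw [abs_of_pos hc0]; exact hc1
  have htend : Filter.Tendsto (fun n : ℕ => C * ((n:ℝ)^1 * c^n + c^n)) Filter.atTop (nhds 0) := by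
    have := (tendsto_pow_const_mul_const_pow_of_abs_lt_one 1 habs).add
      (tendsto_pow_atTop_nhds_zero_of_abs_lt_one habs)
    simpa using this.const_mul C
  obtain ⟨k, hk1', hklt⟩ :=
    ((htend.eventually (gt_mem_nhds (show (0:ℝ) < 1 by norm_num))).and
      (Filter.eventually_ge_atTop 1)).exists
  refine ⟨k, hklt, ?_⟩
  have hkpos : (0:ℝ) < (k:ℝ) + 1 := by positivity
  have step1 : C * c^k < ((k:ℝ)+1)⁻¹ := by
    rw [inv_eq_one_div, lt_div_iff₀ hkpos]
    calc C * c^k * ((k:ℝ)+1) = C * ((k:ℝ)^1 * c^k + c^k) := by ring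
    _ < 1 := hk1'
  have step2 : ((k:ℝ)+1)⁻¹ ≤ y k := by
    apply inv_anti₀ (Real.sqrt_pos.2 (hs k))
    rw [show (k:ℝ)+1 = Real.sqrt (((k:ℝ)+1)^2) by rw [Real.sqrt_sq hkpos.le]]
    exact Real.sqrt_le_sqrt (by nlinarith)
  exact lt_of_lt_of_le (lt_of_lt_of_le step1 step2) (lower k)
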